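/- Let F_n be the free group on generators a₁,…,aₙ (n ≥ 1) and let F_{n-1} be the subgroup generated by a₁,…,a_{n-1}. If Φ : F_n → F_n is an automorphism with Φ(F_{n-1}) = F_{n-1}, then the reduced word Φ(aₙ) contains exactly one occurrence of aₙ or aₙ⁻¹. -/

import Mathlib

set_option linter.unusedSectionVars false

namespace Stmt3Aux
open FreeGroup List

variable {α : Type*} [DecidableEq α]

/-- predicate: the word is reduced -/
def Rd (l : List (α × Bool)) : Prop := l.IsChain fun a b => ¬(a.1 = b.1 ∧ a.2 = !b.2)

theorem Rd.nil : Rd ([] : List (α × Bool)) := List.isChain_nil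

theorem reduce_eq_self_of_rd : ∀ {l : List (α × Bool)}, Rd l → FreeGroup.reduce l = l := by
  intro l
  induction l with
  | nil => intro _; rfl
  | cons x tl ih =>
    intro h
    have htl : Rd tl := h.tail
    rw [FreeGroup.reduce.cons, ih htl]
    cases tl with
    | nil => rfl
    | cons hd tl2 =>
      have hx : ¬(x.1 = hd.1 ∧ x.2 = !hd.2) := (List.isChain_cons_cons.1 h).1
      simp [hx]

theorem rd_of_reduce_eq : ∀ {l : List (α × Bool)}, FreeGroup.reduce l = l → Rd l := by
  intro l
  induction l with
  | nil => intro _; exact List.isChain_nil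
  | cons x tl ih =>
    intro h
    rw [FreeGroup.reduce.cons] at h
    rcases htl : FreeGroup.reduce tl with _ | ⟨hd, tl2⟩
    · rw [htl] at h
      simp at h
      subst h
      exact List.isChain_singleton x
    · rw [htl] at h
      by_cases hc : x.1 = hd.1 ∧ x.2 = !hd.2
      · exfalso
        simp only [if_pos hc] at h
        have h1 : tl2.length = tl.length + 1 := by rw [h]; rfl
        have hle : (FreeGroup.reduce tl).length ≤ tl.length := FreeGroup.reduce.red.length_le
        rw [htl] at hle
        simp only [List.length_cons] at hle
        omega
      · simp only [if_neg hc] at h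
        have h2 : hd :: tl2 = tl := by
          have := congrArg List.tail h
          simpa using this
        have : Rd tl := ih (htl.trans h2)
        rw [← h2] at this ⊢
        exact List.isChain_cons_cons.2 ⟨hc, this⟩

theorem rd_toWord (x : FreeGroup α) : Rd x.toWord := rd_of_reduce_eq x.reduce_toWord

theorem toWord_mk_of_rd {l : List (α × Bool)} (h : Rd l) : (FreeGroup.mk l).toWord = l := by
  rw [FreeGroup.toWord_mk, reduce_eq_self_of_rd h]

theorem Rd.infix {l₁ l : List (α × Bool)} (h : Rd l) (h' : l₁ <:+: l) : Rd l₁ :=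
  List.IsChain.infix h h'

/-- inversion of words: basic lemmas -/
theorem invRev_cons (x : α × Bool) (l : List (α × Bool)) :
    invRev (x :: l) = invRev l ++ [(x.1, !x.2)] := by
  simp [invRev]

theorem head?_invRev (l : List (α × Bool)) :
    (invRev l).head? = l.getLast?.map fun x => (x.1, !x.2) := by
  simp [invRev, List.head?_reverse, List.getLast?_map]

theorem getLast?_invRev (l : List (α × Bool)) :
    (invRev l).getLast? = l.head?.map fun x => (x.1, !x.2) := by
  simp [invRev, List.getLast?_reverse, List.head?_map]

theorem rd_invRev {l : List (α × Bool)} (h : Rd l) : Rd (invRev l) := by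
  unfold Rd invRev
  rw [List.isChain_reverse, List.isChain_map]
  unfold Rd at h
  apply List.IsChain.imp _ h
  rintro ⟨a1, a2⟩ ⟨b1, b2⟩ hab ⟨h1, h2⟩
  simp only [flip] at *
  exact hab ⟨h1.symm, by simpa using h2.symm⟩

theorem countP_invRev (p : α → Prop) [DecidablePred p] (l : List (α × Bool)) :
    (invRev l).countP (fun x => p x.1) = l.countP (fun x => p x.1) := by
  simp [invRev, List.countP_map]
  rfl

/-! ### counting occurrences of the distinguished generator -/

variable (t : α)

def cnt (l : List (α × Bool)) : ℕ := l.countP fun p => p.1 = t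

def cc (x : FreeGroup α) : ℕ := cnt t x.toWord

theorem cnt_append (l₁ l₂ : List (α × Bool)) : cnt t (l₁ ++ l₂) = cnt t l₁ + cnt t l₂ :=
  List.countP_append

theorem cnt_invRev (l : List (α × Bool)) : cnt t (invRev l) = cnt t l :=
  countP_invRev (· = t) l

theorem cc_one : cc t (1 : FreeGroup α) = 0 := by
  simp [cc, cnt, FreeGroup.toWord_one]

theorem cc_inv (x : FreeGroup α) : cc t x⁻¹ = cc t x := by
  rw [cc, FreeGroup.toWord_inv, cnt_invRev, cc]

theorem cc_mul_le (x y : FreeGroup α) : cc t (x * y) ≤ cc t x + cc t y := by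
  have h := (FreeGroup.toWord_mul_sublist x y).countP_le (p := fun p => decide (p.1 = t))
  rw [List.countP_append] at h
  exact h

theorem cc_of_ne {i : α} (h : i ≠ t) : cc t (FreeGroup.of i) = 0 := by
  simp [cc, cnt, FreeGroup.toWord_of, h]

theorem cc_of_self : cc t (FreeGroup.of t) = 1 := by
  simp [cc, cnt, FreeGroup.toWord_of]

def Hsub : Subgroup (FreeGroup α) where
  carrier := {x | cc t x = 0}
  one_mem' := cc_one t
  mul_mem' := by
    intro a b ha hb
    have := cc_mul_le t a b
    simp only [Set.mem_setOf_eq] at *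
    omega
  inv_mem' := by
    intro a ha
    simp only [Set.mem_setOf_eq] at *
    rw [cc_inv]
    exact ha

theorem mem_Hsub {x : FreeGroup α} : x ∈ Hsub t ↔ cc t x = 0 := Iff.rfl

theorem mk_mem_closure_of (S : Set α) :
    ∀ (l : List (α × Bool)), (∀ p ∈ l, p.1 ∈ S) →
      FreeGroup.mk l ∈ Subgroup.closure (FreeGroup.of '' S) := by
  intro l
  induction l with
  | nil => intro _; exact Subgroup.one_mem _
  | cons x l ih =>
    intro h
    have : FreeGroup.mk (x :: l) = FreeGroup.mk [x] * FreeGroup.mk l := by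
      rw [FreeGroup.mul_mk]; rfl
    rw [this]
    refine Subgroup.mul_mem _ ?_ (ih fun p hp => h p (List.mem_cons_of_mem _ hp))
    have hx : FreeGroup.of x.1 ∈ Subgroup.closure (FreeGroup.of '' S) :=
      Subgroup.subset_closure ⟨x.1, h x (List.mem_cons_self), rfl⟩
    rcases x with ⟨i, b⟩
    cases b
    · have : FreeGroup.mk [(i, false)] = (FreeGroup.of i)⁻¹ := by
        rw [FreeGroup.of, FreeGroup.inv_mk]; rfl
      rw [this]
      exact Subgroup.inv_mem _ hx
    · exact hx

theorem closure_eq_Hsub : Subgroup.closure (FreeGroup.of '' {i : α | i ≠ t}) = Hsub t := by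
  apply _root_.le_antisymm
  · rw [Subgroup.closure_le]
    rintro _ ⟨i, hi, rfl⟩
    exact cc_of_ne t hi
  · intro x hx
    have hx' : ∀ p ∈ x.toWord, p.1 ∈ {i : α | i ≠ t} := by
      intro p hp
      rw [mem_Hsub] at hx
      have := List.countP_eq_zero.1 hx p hp
      simpa using this
    have := mk_mem_closure_of {i : α | i ≠ t} x.toWord hx'
    rwa [FreeGroup.mk_toWord] at this

/-! ### cyclic peeling -/

def peel : List (α × Bool) → List (α × Bool) × List (α × Bool)
  | [] => ([], [])
  | [x] => ([], [x])
  | x :: y :: l =>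
    if (y :: l).getLast (by simp) = (x.1, !x.2) then
      let p := peel ((y :: l).dropLast)
      (x :: p.1, p.2)
    else ([], x :: y :: l)
termination_by l => l.length
decreasing_by simp [List.length_dropLast]

theorem peel_spec1 : ∀ l : List (α × Bool), (peel l).1 ++ (peel l).2 ++ invRev (peel l).1 = l := by
  intro l
  induction l using peel.induct with
  | case1 => simp [peel, invRev]
  | case2 x => simp [peel, invRev]
  | case3 x y l hlast ih =>
    rw [peel]
    simp only [if_pos hlast]
    show (x :: (peel _).1) ++ (peel _).2 ++ invRev (x :: (peel _).1) = _
    rw [invRev_cons]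
    have : (x :: (peel ((y :: l).dropLast)).1) ++ (peel ((y :: l).dropLast)).2 ++
        (invRev (peel ((y :: l).dropLast)).1 ++ [(x.1, !x.2)]) =
        x :: (((peel ((y :: l).dropLast)).1 ++ (peel ((y :: l).dropLast)).2 ++
          invRev (peel ((y :: l).dropLast)).1) ++ [(x.1, !x.2)]) := by
      simp
    rw [this, ih]
    rw [← hlast]
    rw [List.dropLast_append_getLast]
  | case4 x y l hlast =>
    rw [peel]
    simp [if_neg hlast, invRev]

theorem peel_spec2 : ∀ l : List (α × Bool), Rd l → l ≠ [] →
    (peel l).2 ≠ [] ∧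
      (∀ a ∈ (peel l).2.head?, ∀ b ∈ (peel l).2.getLast?, b ≠ (a.1, !a.2)) := by
  intro l
  induction l using peel.induct with
  | case1 => intro _ h; exact absurd rfl h
  | case2 x =>
    intro _ _
    constructor
    · simp [peel]
    · simp only [peel, List.head?_cons, List.getLast?_singleton, Option.mem_some_iff]
      rintro a rfl b rfl
      intro hb
      have : x.2 = !x.2 := congrArg Prod.snd hb
      simp at this
  | case3 x y l hlast ih =>
    intro hrd _
    rw [peel]
    simp only [if_pos hlast]
    have hne : (y :: l).dropLast ≠ [] := by
      intro hemp
      -- then l = [], y = (x.1, !x.2), contradicting Rd [x, y]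
      have hl : l = [] := by
        cases l with
        | nil => rfl
        | cons z l' => simp at hemp
      subst hl
      have hy : y = (x.1, !x.2) := by simpa using hlast
      have := (List.isChain_cons_cons.1 hrd).1
      exact this ⟨by rw [hy], by rw [hy]; simp⟩
    have hrd' : Rd ((y :: l).dropLast) := by
      apply hrd.infix
      have heq : [x] ++ (y :: l).dropLast ++ [(y :: l).getLast (by simp)] = x :: y :: l := by
        rw [List.append_assoc, List.dropLast_append_getLast]
        rfl
      exact ⟨[x], [(y :: l).getLast (by simp)], heq⟩
    exact ih hrd' hne
  | case4 x y l hlast =>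
    intro _ _
    rw [peel]
    simp only [if_neg hlast]
    refine ⟨by simp, ?_⟩
    simp only [List.head?_cons, Option.mem_some_iff]
    rintro a rfl b hb hcontra
    apply hlast
    rw [List.getLast?_eq_getLast (by simp), Option.mem_some_iff] at hb
    have h2 : (y :: l).getLast (by simp) = (x :: y :: l).getLast (by simp) :=
      (List.getLast_cons (by simp)).symm
    rw [h2, hb, hcontra]

/-! ### the main machine -/

def Ok (a b : α × Bool) : Prop := ¬(a.1 = b.1 ∧ a.2 = !b.2)

theorem rd_iff_chain' (l : List (α × Bool)) : Rd l ↔ l.IsChain Ok := Iff.rfl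

theorem ok_of_fst_ne {a b : α × Bool} (h : a.1 ≠ b.1) : Ok a b := fun hc => h hc.1

section Machine

variable (t : α) (Q V : List (α × Bool))

/-- the word for the `k`-th power of `mk V` -/
def Vpow (k : ℤ) : List (α × Bool) :=
  if 0 ≤ k then (List.replicate k.toNat V).flatten else invRev (List.replicate (-k).toNat V).flatten

theorem mk_flatten_replicate (m : ℕ) :
    FreeGroup.mk ((List.replicate m V).flatten) = (FreeGroup.mk V) ^ m :=
  (FreeGroup.pow_mk m).symm

theorem mk_Vpow (k : ℤ) : FreeGroup.mk (Vpow V k) = (FreeGroup.mk V) ^ k := by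
  unfold Vpow
  split_ifs with h
  · rw [mk_flatten_replicate]
    rw [← zpow_natCast]
    congr 1
    omega
  · rw [← FreeGroup.inv_mk, mk_flatten_replicate]
    rw [← zpow_natCast, ← zpow_neg]
    congr 1
    omega

theorem head?_flatten_replicate (hV : V ≠ []) (m : ℕ) (hm : 1 ≤ m) :
    ((List.replicate m V).flatten).head? = V.head? := by
  cases m with
  | zero => omega
  | succ m =>
    rw [List.replicate_succ, List.flatten_cons, List.head?_append]
    have : V.head? = some (V.head hV) := List.head?_eq_head hV
    rw [this]
    rfl

theorem getLast?_flatten_replicate (hV : V ≠ []) (m : ℕ) (hm : 1 ≤ m) :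
    ((List.replicate m V).flatten).getLast? = V.getLast? := by
  induction m with
  | zero => omega
  | succ m ih =>
    rw [List.replicate_succ, List.flatten_cons, List.getLast?_append]
    cases hm' : m with
    | zero => simp
    | succ m' =>
      rw [← hm']
      rw [ih (by omega)]
      have : V.getLast? = some (V.getLast hV) := List.getLast?_eq_getLast hV
      rw [this]
      rfl

theorem rd_flatten_replicate (hV : V ≠ [])
    (hcyc : ∀ a ∈ V.head?, ∀ b ∈ V.getLast?, b ≠ (a.1, !a.2)) (hrdV : Rd V) (m : ℕ) :
    Rd ((List.replicate m V).flatten) := by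
  induction m with
  | zero => exact List.isChain_nil
  | succ m ih =>
    rw [List.replicate_succ, List.flatten_cons]
    rw [rd_iff_chain', List.isChain_append]
    refine ⟨hrdV, ih, ?_⟩
    intro a ha b hb
    cases m with
    | zero => simp at hb
    | succ m' =>
      rw [head?_flatten_replicate V hV _ (by omega)] at hb
      have := hcyc b hb a ha
      intro hc
      apply this
      exact Prod.ext hc.1 hc.2

theorem cnt_flatten_replicate (m : ℕ) :
    cnt t ((List.replicate m V).flatten) = m * cnt t V := by
  induction m with
  | zero => simp [cnt]
  | succ m ih =>
    rw [List.replicate_succ, List.flatten_cons, cnt_append, ih]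
    ring

theorem rd_Vpow (hV : V ≠ [])
    (hcyc : ∀ a ∈ V.head?, ∀ b ∈ V.getLast?, b ≠ (a.1, !a.2)) (hrdV : Rd V) (k : ℤ) :
    Rd (Vpow V k) := by
  unfold Vpow
  split_ifs
  · exact rd_flatten_replicate V hV hcyc hrdV _
  · exact rd_invRev (rd_flatten_replicate V hV hcyc hrdV _)

theorem cnt_Vpow_ge (k : ℤ) (hk : k ≠ 0) : cnt t V ≤ cnt t (Vpow V k) := by
  unfold Vpow
  split_ifs with h
  · rw [cnt_flatten_replicate]
    have : 1 ≤ k.toNat := by omega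
    nlinarith
  · rw [cnt_invRev, cnt_flatten_replicate]
    have : 1 ≤ (-k).toNat := by omega
    nlinarith

theorem head?_Vpow (hV : V ≠ []) (k : ℤ) (hk : k ≠ 0) :
    ∀ b ∈ (Vpow V k).head?, b ∈ V.head? ∨ ∃ a ∈ V.getLast?, b = (a.1, !a.2) := by
  unfold Vpow
  split_ifs with h
  · rw [head?_flatten_replicate V hV _ (by omega)]
    exact fun b hb => Or.inl hb
  · rw [head?_invRev, getLast?_flatten_replicate V hV _ (by omega)]
    intro b hb
    right
    rcases Option.map_eq_some_iff.1 ((Option.mem_def).1 hb) with ⟨a, ha, rfl⟩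
    exact ⟨a, ha, rfl⟩

theorem getLast?_Vpow (hV : V ≠ []) (k : ℤ) (hk : k ≠ 0) :
    ∀ b ∈ (Vpow V k).getLast?, b ∈ V.getLast? ∨ ∃ a ∈ V.head?, b = (a.1, !a.2) := by
  unfold Vpow
  split_ifs with h
  · rw [getLast?_flatten_replicate V hV _ (by omega)]
    exact fun b hb => Or.inl hb
  · rw [getLast?_invRev, head?_flatten_replicate V hV _ (by omega)]
    intro b hb
    right
    rcases Option.map_eq_some_iff.1 ((Option.mem_def).1 hb) with ⟨a, ha, rfl⟩
    exact ⟨a, ha, rfl⟩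

/-- the word for the `k`-th power of `σ = mk (Q ++ V ++ invRev Q)` -/
def chunk (k : ℤ) : List (α × Bool) := Q ++ Vpow V k ++ invRev Q

end Machine

theorem ok_flip {a b : α × Bool} (h : Ok b (a.1, !a.2)) : Ok a (b.1, !b.2) := by
  obtain ⟨a1, a2⟩ := a
  obtain ⟨b1, b2⟩ := b
  unfold Ok at *
  simp only [Bool.not_not] at *
  exact fun hc => h ⟨hc.1.symm, hc.2.symm⟩

theorem ok_inv_inv {a b : α × Bool} (h : Ok b a) : Ok (a.1, !a.2) (b.1, !b.2) := by
  obtain ⟨a1, a2⟩ := a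
  obtain ⟨b1, b2⟩ := b
  unfold Ok at *
  simp only [Bool.not_not] at *
  exact fun hc => h ⟨hc.1.symm, hc.2.symm⟩

theorem mem_or_some {β : Type*} {x b : β} {o : Option β} (h : b ∈ (some x).or o) : b = x := by
  have h2 : some x = some b := h
  exact (Option.some_inj.1 h2).symm

/-- all standing hypotheses about the decomposition `Q ++ V ++ invRev Q` -/
structure Setup (t : α) (Q V : List (α × Bool)) : Prop where
  hrd : Rd (Q ++ V ++ invRev Q)
  hV : V ≠ []
  hcyc : ∀ a ∈ V.head?, ∀ b ∈ V.getLast?, b ≠ (a.1, !a.2)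
  hQh : ∀ a ∈ Q.head?, a.1 = t
  hVh : Q = [] → ∀ a ∈ V.head?, a.1 = t
  hVl : Q = [] → ∀ a ∈ V.getLast?, a.1 = t
  hcnt : 2 ≤ cnt t (Q ++ V ++ invRev Q)

namespace Setup

variable {t : α} {Q V : List (α × Bool)}

theorem rdQ (S : Setup t Q V) : Rd Q :=
  S.hrd.infix ⟨[], V ++ invRev Q, by simp⟩

theorem rdV (S : Setup t Q V) : Rd V :=
  S.hrd.infix ⟨Q, invRev Q, by simp⟩

theorem rdiQ (S : Setup t Q V) : Rd (invRev Q) := rd_invRev S.rdQ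

theorem jQV (S : Setup t Q V) : ∀ a ∈ Q.getLast?, ∀ b ∈ V.head?, Ok a b := by
  have h := S.hrd
  rw [rd_iff_chain', List.append_assoc, List.isChain_append] at h
  intro a ha b hb
  apply h.2.2 a ha
  rw [List.head?_eq_head S.hV] at hb
  rw [List.head?_append, List.head?_eq_head S.hV]
  exact hb

theorem jViQ (S : Setup t Q V) : ∀ a ∈ V.getLast?, ∀ b ∈ (invRev Q).head?, Ok a b := by
  have h := S.hrd
  rw [rd_iff_chain', List.isChain_append] at h
  intro a ha b hb
  apply h.2.2 a _ b hb
  rw [List.getLast?_eq_getLast S.hV] at ha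
  rw [List.getLast?_append, List.getLast?_eq_getLast S.hV]
  exact ha

theorem vpow_ne_nil (S : Setup t Q V) (k : ℤ) (hk : k ≠ 0) : Vpow V k ≠ [] := by
  have h1 : ∀ m : ℕ, 1 ≤ m → (List.replicate m V).flatten ≠ [] := by
    intro m hm hemp
    have := head?_flatten_replicate V S.hV m hm
    rw [hemp, List.head?_eq_head S.hV] at this
    simp at this
  unfold Vpow
  split_ifs with h
  · exact h1 _ (by omega)
  · intro hemp
    apply h1 (-k).toNat (by omega)
    have := congrArg invRev hemp
    rwa [invRev_invRev, invRev_empty] at this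

theorem inv_ne_nil (hQ0 : Q ≠ []) : invRev Q ≠ [] := by
  intro hc
  apply hQ0
  have := congrArg List.length hc
  rw [invRev_length] at this
  exact List.length_eq_zero_iff.1 this

theorem chunk_ne_nil (S : Setup t Q V) (k : ℤ) (hk : k ≠ 0) : chunk Q V k ≠ [] := by
  unfold chunk
  intro h
  rcases List.append_eq_nil_iff.1 h with ⟨h1, -⟩
  exact S.vpow_ne_nil k hk (List.append_eq_nil_iff.1 h1).2

theorem chunk_head (S : Setup t Q V) (k : ℤ) (hk : k ≠ 0) :
    ∀ b ∈ (chunk Q V k).head?, b.1 = t := by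
  intro b hb
  unfold chunk at hb
  rw [List.append_assoc, List.head?_append] at hb
  by_cases hQ0 : Q = []
  · subst hQ0
    simp only [List.head?_nil, Option.none_or] at hb
    rw [List.head?_append, List.head?_eq_head (S.vpow_ne_nil k hk)] at hb
    obtain rfl := mem_or_some hb
    rcases head?_Vpow V S.hV k hk _ (List.head?_eq_head (S.vpow_ne_nil k hk))
      with h | ⟨a, ha, heq⟩
    · exact S.hVh rfl _ h
    · rw [heq]
      exact S.hVl rfl a ha
  · rw [List.head?_eq_head hQ0] at hb
    obtain rfl := mem_or_some hb
    exact S.hQh _ (List.head?_eq_head hQ0)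

theorem chunk_last (S : Setup t Q V) (k : ℤ) (hk : k ≠ 0) :
    ∀ b ∈ (chunk Q V k).getLast?, b.1 = t := by
  intro b hb
  unfold chunk at hb
  rw [List.getLast?_append] at hb
  by_cases hQ0 : Q = []
  · subst hQ0
    simp only [invRev_empty, List.getLast?_nil, Option.or_none] at hb
    rw [List.getLast?_append] at hb
    simp only [List.getLast?_nil, Option.or_none] at hb
    rcases getLast?_Vpow V S.hV k hk _ hb with h | ⟨a, ha, heq⟩
    · exact S.hVl rfl _ h
    · rw [heq]
      exact S.hVh rfl a ha
  · have hne : invRev Q ≠ [] := inv_ne_nil hQ0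
    rw [List.getLast?_eq_getLast hne] at hb
    obtain rfl := mem_or_some hb
    have hmem : (invRev Q).getLast hne ∈ (invRev Q).getLast? := by
      rw [List.getLast?_eq_getLast hne]; rfl
    rw [getLast?_invRev] at hmem
    rcases Option.map_eq_some_iff.1 hmem with ⟨a, ha, heq⟩
    rw [← heq]
    exact S.hQh a ha

theorem rd_chunk (S : Setup t Q V) (k : ℤ) (hk : k ≠ 0) : Rd (chunk Q V k) := by
  unfold chunk
  rw [rd_iff_chain', List.append_assoc, List.isChain_append]
  refine ⟨S.rdQ, ?_, ?_⟩
  · rw [List.isChain_append]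
    refine ⟨rd_Vpow V S.hV S.hcyc S.rdV k, S.rdiQ, ?_⟩
    intro a ha b hb
    rw [head?_invRev] at hb
    rcases Option.map_eq_some_iff.1 hb with ⟨q, hq, rfl⟩
    rcases getLast?_Vpow V S.hV k hk a ha with h | ⟨h', hh', rfl⟩
    · exact S.jViQ a h _ (by rw [head?_invRev, hq]; rfl)
    · exact ok_inv_inv (S.jQV q hq h' hh')
  · intro a ha b hb
    rw [List.head?_append, List.head?_eq_head (S.vpow_ne_nil k hk)] at hb
    obtain rfl := mem_or_some hb
    rcases head?_Vpow V S.hV k hk _ (List.head?_eq_head (S.vpow_ne_nil k hk))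
      with h | ⟨a', ha', heq⟩
    · exact S.jQV a ha _ h
    · rw [heq]
      apply ok_flip
      apply S.jViQ a' ha'
      rw [head?_invRev, ha]
      rfl

theorem cnt_chunk_ge (S : Setup t Q V) (k : ℤ) (hk : k ≠ 0) : 2 ≤ cnt t (chunk Q V k) := by
  have h := S.hcnt
  unfold chunk
  rw [cnt_append, cnt_append] at h ⊢
  have := cnt_Vpow_ge t V k hk
  omega

theorem mk_chunk (k : ℤ) :
    FreeGroup.mk (chunk Q V k) = (FreeGroup.mk (Q ++ V ++ invRev Q)) ^ k := by
  unfold chunk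
  rw [← FreeGroup.mul_mk, ← FreeGroup.mul_mk, ← FreeGroup.mul_mk, ← FreeGroup.mul_mk]
  rw [← FreeGroup.inv_mk, mk_Vpow]
  have hconj : ∀ (g h : FreeGroup α) (k : ℤ), (g * h * g⁻¹) ^ k = g * h ^ k * g⁻¹ := by
    intro g h k
    have : g * h * g⁻¹ = (MulAut.conj g) h := by simp [MulAut.conj_apply]
    rw [this, ← map_zpow]
    simp [MulAut.conj_apply]
  exact (hconj _ _ _).symm

end Setup

/-- evaluation of a normal-form expression -/
def evf (σ : FreeGroup α) (x₀ : FreeGroup α) (L : List (ℤ × FreeGroup α)) : FreeGroup α :=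
  L.foldr (fun p acc => acc * σ ^ p.1 * p.2) x₀

/-- the corresponding word -/
def wdf (Q V : List (α × Bool)) (x₀ : FreeGroup α) (L : List (ℤ × FreeGroup α)) :
    List (α × Bool) :=
  L.foldr (fun p acc => acc ++ chunk Q V p.1 ++ p.2.toWord) x₀.toWord

theorem evf_nil (σ x₀ : FreeGroup α) : evf σ x₀ [] = x₀ := rfl

theorem evf_cons (σ x₀ : FreeGroup α) (p : ℤ × FreeGroup α) (L : List (ℤ × FreeGroup α)) :
    evf σ x₀ (p :: L) = evf σ x₀ L * σ ^ p.1 * p.2 := rfl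

theorem wdf_nil (Q V : List (α × Bool)) (x₀ : FreeGroup α) : wdf Q V x₀ [] = x₀.toWord := rfl

theorem wdf_cons (Q V : List (α × Bool)) (x₀ : FreeGroup α) (p : ℤ × FreeGroup α)
    (L : List (ℤ × FreeGroup α)) :
    wdf Q V x₀ (p :: L) = wdf Q V x₀ L ++ chunk Q V p.1 ++ p.2.toWord := rfl

theorem toWord_no_t {t : α} {x : FreeGroup α} (hx : cc t x = 0) :
    ∀ a ∈ x.toWord, ¬(a.1 = t) :=
  fun a ha => by simpa using List.countP_eq_zero.1 hx a ha

namespace Setup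

variable {t : α} {Q V : List (α × Bool)}

theorem append_step (S : Setup t Q V) {W : List (α × Bool)} (hW : Rd W)
    (hWl : ∀ a ∈ W.getLast?, ¬(a.1 = t)) (k : ℤ) (hk : k ≠ 0) (x : FreeGroup α)
    (hx : cc t x = 0) :
    Rd (W ++ chunk Q V k ++ x.toWord) ∧ 2 ≤ cnt t (W ++ chunk Q V k ++ x.toWord) ∧
      (x ≠ 1 → ∀ a ∈ (W ++ chunk Q V k ++ x.toWord).getLast?, ¬(a.1 = t)) := by
  refine ⟨?_, ?_, ?_⟩
  · rw [rd_iff_chain', List.append_assoc, List.isChain_append]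
    refine ⟨hW, ?_, ?_⟩
    · rw [List.isChain_append]
      refine ⟨S.rd_chunk k hk, rd_toWord x, ?_⟩
      intro a ha b hb
      have ha' : a.1 = t := S.chunk_last k hk a ha
      have hb' : ¬(b.1 = t) := toWord_no_t hx b (List.mem_of_mem_head? hb)
      exact ok_of_fst_ne (by rw [ha']; exact fun hc => hb' hc.symm)
    · intro a ha b hb
      rw [List.head?_append, List.head?_eq_head (S.chunk_ne_nil k hk)] at hb
      obtain rfl := mem_or_some hb
      have hb' : (chunk Q V k).head (S.chunk_ne_nil k hk) ∈ (chunk Q V k).head? :=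
        List.head?_eq_head _
      have := S.chunk_head k hk _ hb'
      exact ok_of_fst_ne (by rw [this]; exact fun hc => hWl a ha hc)
  · rw [cnt_append, cnt_append]
    have := S.cnt_chunk_ge k hk
    omega
  · intro hx1 a ha
    rw [List.getLast?_append, List.getLast?_eq_getLast
      (fun hc => hx1 (FreeGroup.toWord_eq_nil_iff.1 hc))] at ha
    obtain rfl := mem_or_some ha
    exact toWord_no_t hx _ (List.getLast_mem _)

theorem main_ind (S : Setup t Q V) (x₀ : FreeGroup α) (hx₀ : cc t x₀ = 0) :
    ∀ L : List (ℤ × FreeGroup α), (∀ p ∈ L, p.1 ≠ 0 ∧ cc t p.2 = 0 ∧ p.2 ≠ 1) →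
      evf (FreeGroup.mk (Q ++ V ++ invRev Q)) x₀ L = FreeGroup.mk (wdf Q V x₀ L) ∧
        Rd (wdf Q V x₀ L) ∧ (∀ a ∈ (wdf Q V x₀ L).getLast?, ¬(a.1 = t)) ∧
          (L ≠ [] → 2 ≤ cnt t (wdf Q V x₀ L)) := by
  intro L
  induction L with
  | nil =>
    intro _
    refine ⟨(FreeGroup.mk_toWord).symm, rd_toWord x₀, ?_, fun h => absurd rfl h⟩
    intro a ha
    exact toWord_no_t hx₀ a (List.mem_of_mem_getLast? ha)
  | cons p L ih =>
    intro hL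
    obtain ⟨hk, hx, hx1⟩ := hL p (List.mem_cons_self)
    obtain ⟨ihe, ihrd, ihl, -⟩ := ih fun q hq => hL q (List.mem_cons_of_mem _ hq)
    obtain ⟨hrd', hcnt', hlast'⟩ := S.append_step ihrd ihl p.1 hk p.2 hx
    rw [wdf_cons]
    refine ⟨?_, hrd', hlast' hx1, fun _ => hcnt'⟩
    rw [evf_cons, ihe, ← Setup.mk_chunk (Q := Q) (V := V) p.1]
    conv_lhs => rw [← FreeGroup.mk_toWord (x := p.2)]
    rw [FreeGroup.mul_mk, FreeGroup.mul_mk]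

theorem not_of_t (S : Setup t Q V) (x₀ : FreeGroup α) (L : List (ℤ × FreeGroup α))
    (hx₀ : cc t x₀ = 0) (hL : ∀ p ∈ L, p.1 ≠ 0 ∧ cc t p.2 = 0)
    (htail : ∀ p ∈ L.tail, p.2 ≠ 1) :
    evf (FreeGroup.mk (Q ++ V ++ invRev Q)) x₀ L ≠ FreeGroup.of t := by
  cases L with
  | nil =>
    rw [evf_nil]
    intro h
    rw [h] at hx₀
    rw [cc_of_self] at hx₀
    exact one_ne_zero hx₀
  | cons p L =>
    obtain ⟨ihe, ihrd, ihl, -⟩ := S.main_ind x₀ hx₀ L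
      (fun q hq => ⟨(hL q (List.mem_cons_of_mem _ hq)).1, (hL q (List.mem_cons_of_mem _ hq)).2,
        htail q hq⟩)
    obtain ⟨hk, hx⟩ := hL p (List.mem_cons_self)
    obtain ⟨hrd', hcnt', -⟩ := S.append_step ihrd ihl p.1 hk p.2 hx
    intro h
    have he : evf (FreeGroup.mk (Q ++ V ++ invRev Q)) x₀ (p :: L) =
        FreeGroup.mk (wdf Q V x₀ L ++ chunk Q V p.1 ++ p.2.toWord) := by
      rw [evf_cons, ihe, ← Setup.mk_chunk (Q := Q) (V := V) p.1]
      conv_lhs => rw [← FreeGroup.mk_toWord (x := p.2)]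
      rw [FreeGroup.mul_mk, FreeGroup.mul_mk]
    rw [he] at h
    have hw : wdf Q V x₀ L ++ chunk Q V p.1 ++ p.2.toWord = (FreeGroup.of t).toWord := by
      rw [← h, toWord_mk_of_rd hrd']
    rw [FreeGroup.toWord_of] at hw
    have : cnt t (wdf Q V x₀ L ++ chunk Q V p.1 ++ p.2.toWord) = 1 := by
      rw [hw]
      simp [cnt]
    omega

/-- the key theorem: the special generator is not in the subgroup generated by `Hsub`
together with `σ = mk (Q ++ V ++ invRev Q)`. -/
theorem key (S : Setup t Q V) :
    FreeGroup.of t ∉ Subgroup.closure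
      ((Hsub t : Set (FreeGroup α)) ∪ {FreeGroup.mk (Q ++ V ++ invRev Q)}) := by
  set σ := FreeGroup.mk (Q ++ V ++ invRev Q) with hσ
  intro hmem
  set Xs : Set (FreeGroup α) := (Hsub t : Set (FreeGroup α)) ∪ {σ} with hXs
  have h1 : FreeGroup.of t ∈ Submonoid.closure (Xs ∪ Xs⁻¹) := by
    have h0 : FreeGroup.of t ∈ (Subgroup.closure Xs).toSubmonoid := hmem
    rwa [Subgroup.closure_toSubmonoid] at h0
  obtain ⟨l, hl, hprod⟩ := Submonoid.exists_list_of_mem_closure h1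
  -- every product of generators lies in the set of normal forms
  have hstep : ∀ (g : FreeGroup α), (∃ x₀ L, cc t x₀ = 0 ∧ (∀ p ∈ L, p.1 ≠ 0 ∧ cc t p.2 = 0) ∧
      (∀ p ∈ L.tail, p.2 ≠ 1) ∧ g = evf σ x₀ L) → ∀ y ∈ Xs ∪ Xs⁻¹,
      ∃ x₀ L, cc t x₀ = 0 ∧ (∀ p ∈ L, p.1 ≠ 0 ∧ cc t p.2 = 0) ∧
      (∀ p ∈ L.tail, p.2 ≠ 1) ∧ g * y = evf σ x₀ L := by
    rintro g ⟨x₀, L, hx₀, hL, htail, rfl⟩ y hy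
    have hy' : cc t y = 0 ∨ y = σ ∨ y = σ⁻¹ := by
      rcases hy with hy | hy
      · rcases hy with hy | hy
        · exact Or.inl hy
        · exact Or.inr (Or.inl hy)
      · rcases hy with hy | hy
        · exact Or.inl (by rw [← cc_inv]; exact hy)
        · right; right
          rw [← inv_inv y, Set.mem_singleton_iff.1 hy]
    rcases hy' with hy0 | hyσ
    · -- multiply by an element of H
      cases L with
      | nil =>
        refine ⟨x₀ * y, [], ?_, by simp, by simp, rfl⟩
        have := cc_mul_le t x₀ y
        omega
      | cons p L =>
        refine ⟨x₀, (p.1, p.2 * y) :: L, hx₀, ?_, ?_, ?_⟩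
        · intro q hq
          rcases List.mem_cons.1 hq with rfl | hq'
          · refine ⟨(hL p (List.mem_cons_self)).1, ?_⟩
            have h1 := (hL p (List.mem_cons_self)).2
            have := cc_mul_le t p.2 y
            show cc t (p.2 * y) = 0
            omega
          · exact hL q (List.mem_cons_of_mem _ hq')
        · exact htail
        · rw [evf_cons, evf_cons, mul_assoc]
    · -- multiply by σ^e
      obtain ⟨e, he, rfl⟩ : ∃ e : ℤ, (e = 1 ∨ e = -1) ∧ y = σ ^ e := by
        rcases hyσ with rfl | rfl
        · exact ⟨1, Or.inl rfl, (zpow_one σ).symm⟩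
        · exact ⟨-1, Or.inr rfl, by rw [zpow_neg, zpow_one]⟩
      have he0 : e ≠ 0 := by rcases he with rfl | rfl <;> decide
      cases L with
      | nil =>
        refine ⟨x₀, [(e, 1)], hx₀, ?_, by simp, ?_⟩
        · intro q hq
          rcases List.mem_cons.1 hq with rfl | hq'
          · exact ⟨he0, cc_one t⟩
          · simp at hq'
        · simp only [evf_cons, evf_nil, mul_one]
      | cons p L =>
        obtain ⟨k, x⟩ := p
        by_cases hx1 : x = 1
        · subst hx1
          by_cases hke : k + e = 0
          · refine ⟨x₀, L, hx₀, fun q hq => hL q (List.mem_cons_of_mem _ hq),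
              fun q hq => htail q (List.mem_of_mem_tail hq), ?_⟩
            simp only [evf_cons, mul_one]
            rw [mul_assoc, ← zpow_add, hke, zpow_zero, mul_one]
          · refine ⟨x₀, (k + e, 1) :: L, hx₀, ?_, htail, ?_⟩
            · intro q hq
              rcases List.mem_cons.1 hq with rfl | hq'
              · exact ⟨hke, cc_one t⟩
              · exact hL q (List.mem_cons_of_mem _ hq')
            · simp only [evf_cons, mul_one]
              rw [mul_assoc, ← zpow_add]
        · refine ⟨x₀, (e, 1) :: (k, x) :: L, hx₀, ?_, ?_, ?_⟩
          · intro q hq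
            rcases List.mem_cons.1 hq with rfl | hq'
            · exact ⟨he0, cc_one t⟩
            · exact hL q hq'
          · intro q hq
            rcases List.mem_cons.1 hq with rfl | hq'
            · exact hx1
            · exact htail q hq'
          · simp only [evf_cons, mul_one]
  have hSS : ∀ (l' : List (FreeGroup α)), (∀ y ∈ l', y ∈ Xs ∪ Xs⁻¹) →
      ∃ x₀ L, cc t x₀ = 0 ∧ (∀ p ∈ L, p.1 ≠ 0 ∧ cc t p.2 = 0) ∧
        (∀ p ∈ L.tail, p.2 ≠ 1) ∧ l'.prod = evf σ x₀ L := by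
    intro l'
    induction l' using List.reverseRecOn with
    | nil =>
      intro _
      exact ⟨1, [], cc_one t, by simp, by simp, by simp [evf_nil]⟩
    | append_singleton l' y ih =>
      intro hmem'
      obtain ⟨x₀, L, h1, h2, h3, h4⟩ := ih fun z hz => hmem' z (List.mem_append_left _ hz)
      have := hstep l'.prod ⟨x₀, L, h1, h2, h3, h4⟩ y (hmem' y (List.mem_append_right _
        (List.mem_singleton_self y)))
      obtain ⟨x₀', L', g1, g2, g3, g4⟩ := this
      exact ⟨x₀', L', g1, g2, g3, by rw [List.prod_append, List.prod_singleton, g4]⟩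
  obtain ⟨x₀, L, h1, h2, h3, h4⟩ := hSS l hl
  rw [hprod] at h4
  exact S.not_of_t x₀ L h1 h2 h3 h4.symm

end Setup

theorem cc_mk_le (t : α) (l : List (α × Bool)) : cc t (FreeGroup.mk l) ≤ cnt t l := by
  have h : FreeGroup.reduce l <+ l := (FreeGroup.reduce.red (L := l)).sublist
  have := h.countP_le (p := fun p => decide (p.1 = t))
  rw [cc, FreeGroup.toWord_mk]
  exact this

def Pt (t : α) : α × Bool → Bool := fun p => decide (p.1 ≠ t)

theorem Pt_false {t : α} {p : α × Bool} (h : Pt t p = false) : p.1 = t := by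
  simpa [Pt] using h

theorem Pt_true {t : α} {p : α × Bool} (h : Pt t p = true) : p.1 ≠ t := by
  simpa [Pt] using h

theorem exists_setup {t : α} (w : FreeGroup α) (h2 : 2 ≤ cc t w) :
    ∃ (Q V : List (α × Bool)) (x y : FreeGroup α), Setup t Q V ∧ cc t x = 0 ∧ cc t y = 0 ∧
      w = x * FreeGroup.mk (Q ++ V ++ invRev Q) * y := by
  classical
  set W := w.toWord with hW
  set pre := W.takeWhile (Pt t) with hpre
  set mid := W.dropWhile (Pt t) with hmid
  set suf := (mid.reverse.takeWhile (Pt t)).reverse with hsuf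
  set core := (mid.reverse.dropWhile (Pt t)).reverse with hcore
  have hWsplit : W = pre ++ mid := (List.takeWhile_append_dropWhile (p := Pt t) (l := W)).symm
  have hmidsplit : mid = core ++ suf := by
    conv_lhs => rw [← List.reverse_reverse mid,
      ← List.takeWhile_append_dropWhile (p := Pt t) (l := mid.reverse)]
    rw [List.reverse_append]
  have hprecnt : cnt t pre = 0 := by
    apply List.countP_eq_zero.2
    intro a ha
    simpa using Pt_true (List.mem_takeWhile_imp ha)
  have hsufcnt : cnt t suf = 0 := by
    apply List.countP_eq_zero.2
    intro a ha
    rw [hsuf, List.mem_reverse] at ha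
    simpa using Pt_true (List.mem_takeWhile_imp ha)
  have hcorecnt : 2 ≤ cnt t core := by
    have hc : cnt t W = cnt t pre + (cnt t core + cnt t suf) := by
      conv_lhs => rw [hWsplit, hmidsplit]
      rw [cnt_append, cnt_append]
    have h2' : 2 ≤ cnt t W := h2
    omega
  have hcorene : core ≠ [] := by
    intro h
    rw [h] at hcorecnt
    simp [cnt] at hcorecnt
  have hrdW : Rd W := rd_toWord w
  have hWsplit2 : W = pre ++ core ++ suf := by rw [hWsplit, hmidsplit, List.append_assoc]
  have hrdcore : Rd core := hrdW.infix ⟨pre, suf, hWsplit2.symm⟩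
  have hmidne : mid ≠ [] := by
    intro h
    rw [hmidsplit] at h
    exact hcorene (List.append_eq_nil_iff.1 h).1
  have hcorehead : ∀ a ∈ core.head?, a.1 = t := by
    intro a ha
    have h1 : core.head? = mid.head? := by
      rw [hmidsplit, List.head?_append, List.head?_eq_head hcorene]
      rfl
    rw [h1, List.head?_eq_head hmidne] at ha
    obtain rfl : mid.head hmidne = a := by simpa using ha
    exact Pt_false (List.head_dropWhile_not (Pt t) hmidne)
  have hcorelast : ∀ a ∈ core.getLast?, a.1 = t := by
    intro a ha
    have hrevne : mid.reverse.dropWhile (Pt t) ≠ [] := by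
      intro h
      apply hcorene
      rw [hcore, h]
      rfl
    have h1 : core.getLast? = (mid.reverse.dropWhile (Pt t)).head? := by
      rw [hcore, ← List.head?_reverse, List.reverse_reverse]
    rw [h1, List.head?_eq_head hrevne] at ha
    obtain rfl : (mid.reverse.dropWhile (Pt t)).head hrevne = a := by simpa using ha
    exact Pt_false (List.head_dropWhile_not (Pt t) hrevne)
  obtain ⟨hVne, hcyc⟩ := peel_spec2 core hrdcore hcorene
  have hpeel : (peel core).1 ++ (peel core).2 ++ invRev (peel core).1 = core := peel_spec1 core
  set Q := (peel core).1 with hQ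
  set V := (peel core).2 with hV
  have hsetup : Setup t Q V := by
    refine ⟨?_, hVne, hcyc, ?_, ?_, ?_, ?_⟩
    · rw [hpeel]; exact hrdcore
    · intro a ha
      apply hcorehead
      have hch : core.head? = (Q.head?).or ((V ++ invRev Q).head?) := by
        rw [← hpeel, List.append_assoc, List.head?_append]
      have hQs : Q.head? = some a := ha
      rw [hch, hQs]
      rfl
    · intro hQ0 a ha
      apply hcorehead
      rw [← hpeel, hQ0]
      simp only [List.nil_append, invRev_empty, List.append_nil]
      exact ha
    · intro hQ0 a ha
      apply hcorelast
      rw [← hpeel, hQ0]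
      simp only [List.nil_append, invRev_empty, List.append_nil]
      exact ha
    · rw [hpeel]; exact hcorecnt
  refine ⟨Q, V, FreeGroup.mk pre, FreeGroup.mk suf, hsetup, ?_, ?_, ?_⟩
  · have := cc_mk_le t pre
    omega
  · have := cc_mk_le t suf
    omega
  · rw [hpeel, FreeGroup.mul_mk, FreeGroup.mul_mk, ← hWsplit2, hW, FreeGroup.mk_toWord]

/-- the main auxiliary result: if `of t` lies in the subgroup generated by `Hsub t`
and a single element `w`, then the reduced word of `w` has exactly one `t`-letter. -/
theorem cc_eq_one {t : α} (w : FreeGroup α)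
    (hmem : FreeGroup.of t ∈ Subgroup.closure ((Hsub t : Set (FreeGroup α)) ∪ {w})) :
    cc t w = 1 := by
  rcases Nat.lt_or_ge (cc t w) 2 with hlt | hge
  · -- rule out 0
    interval_cases h : cc t w
    · exfalso
      have hle : Subgroup.closure ((Hsub t : Set (FreeGroup α)) ∪ {w}) ≤ Hsub t := by
        rw [Subgroup.closure_le]
        apply Set.union_subset
        · exact fun g hg => hg
        · intro g hg
          rw [Set.mem_singleton_iff.1 hg]
          exact h
      have := hle hmem
      rw [mem_Hsub, cc_of_self] at this
      exact one_ne_zero this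
    · rfl
  · exfalso
    obtain ⟨Q, V, x, y, hsetup, hx, hy, hw⟩ := exists_setup w hge
    apply hsetup.key
    have hle : Subgroup.closure ((Hsub t : Set (FreeGroup α)) ∪ {w}) ≤
        Subgroup.closure ((Hsub t : Set (FreeGroup α)) ∪ {FreeGroup.mk (Q ++ V ++ invRev Q)}) := by
      rw [Subgroup.closure_le]
      apply Set.union_subset
      · intro g hg
        exact Subgroup.subset_closure (Set.mem_union_left _ hg)
      · intro g hg
        rw [Set.mem_singleton_iff.1 hg, hw]
        refine Subgroup.mul_mem _ (Subgroup.mul_mem _ ?_ ?_) ?_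
        · exact Subgroup.subset_closure (Set.mem_union_left _ hx)
        · exact Subgroup.subset_closure (Set.mem_union_right _ rfl)
        · exact Subgroup.subset_closure (Set.mem_union_left _ hy)
    exact hle hmem

end Stmt3Aux

/-- Lemma 3.2.1: Let `F_{n+1}` be the free group on generators `a₀, …, aₙ` and let `Fₙ`
be the subgroup generated by all generators except the last one.  If `Φ` is an
automorphism of `F_{n+1}` leaving `Fₙ` invariant, then the reduced word of `Φ(aₙ)`
contains exactly one occurrence of the last generator or its inverse. -/
theorem stmt3 (n : ℕ) (Φ : FreeGroup (Fin (n + 1)) ≃* FreeGroup (Fin (n + 1)))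
    (hinv : (Subgroup.closure (FreeGroup.of '' {i : Fin (n + 1) | i ≠ Fin.last n})).map
        Φ.toMonoidHom = Subgroup.closure (FreeGroup.of '' {i : Fin (n + 1) | i ≠ Fin.last n})) :
    ((Φ (FreeGroup.of (Fin.last n))).toWord.countP fun p => p.1 = Fin.last n) = 1 := by
  classical
  set t := Fin.last n with ht
  set A : Set (FreeGroup (Fin (n + 1))) := FreeGroup.of '' {i | i ≠ t} with hA
  have hclA : Subgroup.closure A = Stmt3Aux.Hsub t := Stmt3Aux.closure_eq_Hsub t
  set w := Φ (FreeGroup.of t) with hw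
  have hmem : FreeGroup.of t ∈
      Subgroup.closure ((Stmt3Aux.Hsub t : Set (FreeGroup (Fin (n + 1)))) ∪ {w}) := by
    have htop : FreeGroup.of t ∈
        Subgroup.map Φ.toMonoidHom (Subgroup.closure (A ∪ {FreeGroup.of t})) := by
      have h1 : Subgroup.closure (A ∪ {FreeGroup.of t}) = ⊤ := by
        rw [eq_top_iff, ← FreeGroup.closure_range_of (Fin (n + 1))]
        rw [Subgroup.closure_le]
        rintro g ⟨i, rfl⟩
        by_cases hi : i = t
        · subst hi
          exact Subgroup.subset_closure (Or.inr rfl)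
        · exact Subgroup.subset_closure (Or.inl ⟨i, hi, rfl⟩)
      rw [h1]
      exact Subgroup.mem_map.2 ⟨Φ.symm (FreeGroup.of t), Subgroup.mem_top _, by simp⟩
    rw [MonoidHom.map_closure, Set.image_union, Set.image_singleton] at htop
    simp only [MulEquiv.coe_toMonoidHom] at htop
    have hsub : ((⇑Φ.toMonoidHom) '' A) ⊆ (Stmt3Aux.Hsub t : Set (FreeGroup (Fin (n + 1)))) := by
      rintro g ⟨a, haA, rfl⟩
      have hmap : Φ.toMonoidHom a ∈ Subgroup.map Φ.toMonoidHom (Subgroup.closure A) :=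
        Subgroup.mem_map.2 ⟨a, Subgroup.subset_closure haA, rfl⟩
      rw [hinv] at hmap
      rw [hclA] at hmap
      exact hmap
    simp only [MulEquiv.coe_toMonoidHom] at hsub
    exact Subgroup.closure_mono (Set.union_subset_union_left _ hsub) htop
  exact Stmt3Aux.cc_eq_one w hmem
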